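/- Let ε ∈ (0, 1/4], let G be a P5-free graph, let v ∈ V(G), let A ⊆ N_G(v) and B ⊆ V(G) \ N_G[v], and suppose B is (ε,χ)-dense to A (i.e., χ(A \ N_G(z)) < ε·χ(A) for all z ∈ B). Then at least one of the following holds: (i) there exist X ⊆ A with χ(X) ≥ ε·χ(A) and Y ⊆ B with χ(Y) ≥ ε·χ(B) such that (X,Y) is a pure pair (X is complete or anticomplete to Y); (ii) there exists C ⊆ A with χ(C) ≥ χ(A)/2 such that G[C] is (4ε,χ)-dense; (iii) there exists D ⊆ B with χ(D) ≥ χ(B)/2 such that G[D] is (4ε,χ)-dense. -/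

import Mathlib

open SimpleGraph

/-- The chromatic number of the subgraph of `G` induced on `S`, as a natural number. -/
noncomputable def chiS {V : Type*} [Fintype V] (G : SimpleGraph V) (S : Set V) : ℕ :=
  (G.induce S).chromaticNumber.toNat

/-- A graph is `P5`-free if it has no induced subgraph isomorphic to the five-vertex path. -/
def P5Free {V : Type*} (G : SimpleGraph V) : Prop :=
  IsEmpty (SimpleGraph.pathGraph 5 ↪g G)

/-- The induced subgraph `G[S]` is `(ε,χ)`-dense: removing any closed neighbourhood
drops the chromatic number below `ε · χ(S)`. -/
def EpsChiDense {V : Type*} [Fintype V] (G : SimpleGraph V) (ε : ℝ) (S : Set V) : Prop :=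
  ∀ u ∈ S, (chiS G (S \ insert u (G.neighborSet u)) : ℝ) < ε * (chiS G S : ℝ)

section Aux

set_option linter.unusedSectionVars false
set_option linter.unreachableTactic false
set_option linter.unusedTactic false

variable {V : Type*} [Fintype V] (G : SimpleGraph V)

lemma chiS_colorable (S : Set V) : (G.induce S).Colorable (chiS G S) :=
  colorable_chromaticNumber_of_fintype _

lemma chiS_le {S : Set V} {n : ℕ} (h : (G.induce S).Colorable n) : chiS G S ≤ n := by
  have h1 := h.chromaticNumber_le
  have := ENat.toNat_le_toNat h1 (by simp)
  simpa [chiS] using this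

lemma chiS_mono {S T : Set V} (h : S ⊆ T) : chiS G S ≤ chiS G T := by
  obtain ⟨c⟩ := chiS_colorable G T
  apply chiS_le
  refine ⟨Coloring.mk (fun x => c ⟨x.1, h x.2⟩) ?_⟩
  intro a b hab heq
  exact c.valid (by simpa using hab) heq

lemma chiS_union (S T : Set V) : chiS G (S ∪ T) ≤ chiS G S + chiS G T := by
  classical
  obtain ⟨cS⟩ := chiS_colorable G S
  obtain ⟨cT⟩ := chiS_colorable G T
  have C : (G.induce (S ∪ T)).Coloring (Fin (chiS G S) ⊕ Fin (chiS G T)) := by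
    refine Coloring.mk (fun x => if h : x.1 ∈ S then Sum.inl (cS ⟨x.1, h⟩)
      else Sum.inr (cT ⟨x.1, x.2.resolve_left h⟩)) ?_
    intro a b hab heq
    have hGab : G.Adj a.1 b.1 := by simpa using hab
    by_cases ha : a.1 ∈ S <;> by_cases hb : b.1 ∈ S <;> simp [ha, hb] at heq
    · exact cS.valid (by simpa using hGab) heq
    · exact cT.valid (by simpa using hGab) heq
  have := C.colorable
  simpa using chiS_le G (this.mono (by simp))

lemma chiS_max {S T : Set V} (hST : ∀ x ∈ S, ∀ y ∈ T, ¬ G.Adj x y) :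
    chiS G (S ∪ T) ≤ max (chiS G S) (chiS G T) := by
  classical
  obtain ⟨cS⟩ := chiS_colorable G S
  obtain ⟨cT⟩ := chiS_colorable G T
  apply chiS_le
  refine ⟨Coloring.mk (fun x => if h : x.1 ∈ S then Fin.castLE (le_max_left _ _) (cS ⟨x.1, h⟩)
      else Fin.castLE (le_max_right _ _) (cT ⟨x.1, x.2.resolve_left h⟩)) ?_⟩
  intro a b hab heq
  have hGab : G.Adj a.1 b.1 := by simpa using hab
  by_cases ha : a.1 ∈ S <;> by_cases hb : b.1 ∈ S <;> simp [ha, hb, Fin.castLE] at heq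
  · exact cS.valid (by simpa using hGab) (Fin.val_injective heq)
  · exact hST a.1 ha b.1 (b.2.resolve_left hb) hGab
  · exact hST b.1 hb a.1 (a.2.resolve_left ha) hGab.symm
  · exact cT.valid (by simpa using hGab) (Fin.val_injective heq)

lemma chiS_empty : chiS G (∅ : Set V) = 0 := by
  have : (G.induce (∅ : Set V)).chromaticNumber = 0 :=
    chromaticNumber_eq_zero_of_isEmpty (G := G.induce (∅ : Set V))
  simp [chiS, this]

lemma chiS_pos {S : Set V} (h : S.Nonempty) : 1 ≤ chiS G S := by
  classical
  have : Nonempty S := h.to_subtype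
  have hpos := chromaticNumber_pos (G := G.induce S) ((G.induce S).colorable_of_fintype)
  have hne : (G.induce S).chromaticNumber ≠ ⊤ :=
    (chromaticNumber_ne_top_iff_exists).2 ⟨_, (G.induce S).colorable_of_fintype⟩
  have := ENat.toNat_le_toNat (Order.one_le_iff_pos.mpr hpos) hne
  simpa [chiS] using this

lemma no_induced_P5 (hP5 : P5Free G) (x1 x2 x3 x4 x5 : V)
    (e12 : G.Adj x1 x2) (e23 : G.Adj x2 x3) (e34 : G.Adj x3 x4) (e45 : G.Adj x4 x5)
    (n13 : ¬ G.Adj x1 x3) (n14 : ¬ G.Adj x1 x4) (n15 : ¬ G.Adj x1 x5)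
    (n24 : ¬ G.Adj x2 x4) (n25 : ¬ G.Adj x2 x5) (n35 : ¬ G.Adj x3 x5)
    (d13 : x1 ≠ x3) (d14 : x1 ≠ x4) (d15 : x1 ≠ x5)
    (d24 : x2 ≠ x4) (d25 : x2 ≠ x5) (d35 : x3 ≠ x5) : False := by
  have d12 := e12.ne
  have d23 := e23.ne
  have d34 := e34.ne
  have d45 := e45.ne
  apply hP5.false
  refine ⟨⟨![x1,x2,x3,x4,x5], ?_⟩, ?_⟩
  · intro a b hab
    fin_cases a <;> fin_cases b <;> simp_all <;> first
      | rfl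
      | (exfalso; first
          | exact d12 hab | exact d12 hab.symm | exact d23 hab | exact d23 hab.symm
          | exact d34 hab | exact d34 hab.symm | exact d45 hab | exact d45 hab.symm
          | exact d13 hab | exact d13 hab.symm | exact d14 hab | exact d14 hab.symm
          | exact d15 hab | exact d15 hab.symm | exact d24 hab | exact d24 hab.symm
          | exact d25 hab | exact d25 hab.symm | exact d35 hab | exact d35 hab.symm)
  · intro a b
    have a21 : G.Adj x2 x1 := e12.symm
    have a32 : G.Adj x3 x2 := e23.symm
    have a43 : G.Adj x4 x3 := e34.symm
    have a54 : G.Adj x5 x4 := e45.symm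
    have m31 : ¬ G.Adj x3 x1 := fun h => n13 h.symm
    have m41 : ¬ G.Adj x4 x1 := fun h => n14 h.symm
    have m51 : ¬ G.Adj x5 x1 := fun h => n15 h.symm
    have m42 : ¬ G.Adj x4 x2 := fun h => n24 h.symm
    have m52 : ¬ G.Adj x5 x2 := fun h => n25 h.symm
    have m53 : ¬ G.Adj x5 x3 := fun h => n35 h.symm
    fin_cases a <;> fin_cases b <;>
      simp only [Matrix.cons_val_zero, Matrix.cons_val_one, Matrix.head_cons,
        Matrix.cons_val_two, Matrix.tail_cons, Matrix.cons_val_three, Matrix.cons_val_four,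
        Matrix.cons_val_fin_one, Matrix.cons_val_succ, Fin.isValue,
        Function.Embedding.coeFn_mk] <;>
      first
        | exact iff_of_false (G.irrefl) (by rw [pathGraph_adj]; decide)
        | exact iff_of_true (by assumption) (by rw [pathGraph_adj]; decide)
        | exact iff_of_false (by assumption) (by rw [pathGraph_adj]; decide)

end Aux

theorem stmt_11 {V : Type*} [Fintype V] (G : SimpleGraph V) (hP5 : P5Free G)
    (ε : ℝ) (hε0 : 0 < ε) (hε : ε ≤ 1 / 4)
    (v : V) (A B : Set V)
    (hA : A ⊆ G.neighborSet v) (hB : B ⊆ (insert v (G.neighborSet v))ᶜ)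
    (hdense : ∀ z ∈ B, (chiS G (A \ G.neighborSet z) : ℝ) < ε * (chiS G A : ℝ)) :
    (∃ X ⊆ A, ∃ Y ⊆ B,
      ε * (chiS G A : ℝ) ≤ (chiS G X : ℝ) ∧ ε * (chiS G B : ℝ) ≤ (chiS G Y : ℝ) ∧
      ((∀ x ∈ X, ∀ z ∈ Y, G.Adj x z) ∨ (∀ x ∈ X, ∀ z ∈ Y, ¬ G.Adj x z))) ∨
    (∃ C ⊆ A, (chiS G A : ℝ) / 2 ≤ (chiS G C : ℝ) ∧ EpsChiDense G (4 * ε) C) ∨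
    (∃ D ⊆ B, (chiS G B : ℝ) / 2 ≤ (chiS G D : ℝ) ∧ EpsChiDense G (4 * ε) D) := by
  classical
  have hcast : ∀ {m n : ℕ}, m ≤ n → (m : ℝ) ≤ (n : ℝ) := fun h => Nat.cast_le.mpr h
  have hsplit : ∀ (S N : Set V), (chiS G S : ℝ) ≤ (chiS G (S ∩ N) : ℝ) + (chiS G (S \ N) : ℝ) := by
    intro S N
    have : chiS G S ≤ chiS G (S ∩ N) + chiS G (S \ N) := by
      calc chiS G S = chiS G ((S ∩ N) ∪ (S \ N)) := by rw [Set.inter_union_diff]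
        _ ≤ _ := chiS_union G _ _
    exact_mod_cast this
  have hBv : ∀ b ∈ B, ¬ G.Adj v b ∧ b ≠ v := by
    intro b hb
    have h1 := hB hb
    simp only [Set.mem_compl_iff, Set.mem_insert_iff, SimpleGraph.mem_neighborSet] at h1
    push_neg at h1
    exact ⟨h1.2, h1.1⟩
  have hAv : ∀ a ∈ A, G.Adj v a := by
    intro a ha
    exact (G.mem_neighborSet v a).mp (hA ha)
  have hAB : ∀ a ∈ A, ∀ b ∈ B, a ≠ b := by
    intro a ha b hb h
    exact (hBv b hb).1 (h ▸ hAv a ha)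
  have hA0 : (0:ℝ) ≤ (chiS G A : ℝ) := Nat.cast_nonneg _
  have hB0 : (0:ℝ) ≤ (chiS G B : ℝ) := Nat.cast_nonneg _
  by_cases hb1 : ε * (chiS G B : ℝ) ≤ 1
  · rcases Set.eq_empty_or_nonempty B with rfl | ⟨b, hbB⟩
    · left
      refine ⟨A, subset_rfl, ∅, Set.empty_subset _, ?_, ?_, Or.inl ?_⟩
      · nlinarith
      · simp [chiS_empty]
      · intro x hx z hz
        exact absurd hz (Set.notMem_empty z)
    · left
      have hd := hdense b hbB
      have h1 := hsplit A (G.neighborSet b)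
      have hY1 : (1:ℝ) ≤ (chiS G {b} : ℝ) := by
        exact_mod_cast chiS_pos G (Set.singleton_nonempty b)
      refine ⟨A ∩ G.neighborSet b, Set.inter_subset_left, {b},
        Set.singleton_subset_iff.mpr hbB, ?_, ?_, Or.inl ?_⟩
      · nlinarith
      · linarith
      · intro x hx z hz
        rcases hz with rfl
        exact ((G.mem_neighborSet z x).mp hx.2).symm
  · push_neg at hb1
    have hpos : (0:ℝ) < ε * (chiS G B : ℝ) := by linarith
    have hBne : B.Nonempty := by
      rcases Set.eq_empty_or_nonempty B with rfl | h
      · rw [chiS_empty G] at hb1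
        norm_num at hb1
      · exact h
    obtain ⟨z0, hz0⟩ := hBne
    have hχApos : (0:ℝ) < (chiS G A : ℝ) := by
      have := hdense z0 hz0
      nlinarith [Nat.cast_nonneg (α := ℝ) (chiS G (A \ G.neighborSet z0))]
    by_contra hcon
    have hno1 : ∀ X ⊆ A, ∀ Y ⊆ B, ε * (chiS G A : ℝ) ≤ (chiS G X : ℝ) →
        (∀ x ∈ X, ∀ z ∈ Y, G.Adj x z) → (chiS G Y : ℝ) < ε * (chiS G B : ℝ) := by
      intro X hX Y hY hXc hcomp
      by_contra hge
      push_neg at hge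
      exact hcon (Or.inl ⟨X, hX, Y, hY, hXc, hge, Or.inl hcomp⟩)
    have hno2 : ∀ C ⊆ A, (chiS G A : ℝ)/2 ≤ (chiS G C : ℝ) →
        ∃ u ∈ C, 4*ε*(chiS G C : ℝ) ≤ (chiS G (C \ insert u (G.neighborSet u)) : ℝ) := by
      intro C hC hChalf
      by_contra hx
      push_neg at hx
      refine hcon (Or.inr (Or.inl ⟨C, hC, hChalf, ?_⟩))
      intro u hu
      have := hx u hu
      linarith
    have hno3 : ∀ D ⊆ B, (chiS G B : ℝ)/2 ≤ (chiS G D : ℝ) →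
        ∃ u ∈ D, 4*ε*(chiS G D : ℝ) ≤ (chiS G (D \ insert u (G.neighborSet u)) : ℝ) := by
      intro D hD hDhalf
      by_contra hx
      push_neg at hx
      refine hcon (Or.inr (Or.inr ⟨D, hD, hDhalf, ?_⟩))
      intro u hu
      have := hx u hu
      linarith
    -- Step 1 : a vertex of A with large non-neighbourhood in A sees almost all of B
    have step1 : ∀ a1 ∈ A, 2*ε*(chiS G A : ℝ) ≤ (chiS G (A \ insert a1 (G.neighborSet a1)) : ℝ) →
        (chiS G (B \ G.neighborSet a1) : ℝ) < ε * (chiS G B : ℝ) := by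
      intro a1 ha1 hbig
      have main : ∀ n : ℕ, ∀ U : Set V, U ⊆ B \ G.neighborSet a1 → U.ncard ≤ n →
          (chiS G U : ℝ) < ε * (chiS G B : ℝ) := by
        intro n
        induction n with
        | zero =>
          intro U hU hcard
          have hU0 : U = ∅ := (Set.ncard_eq_zero (Set.toFinite U)).mp (Nat.le_zero.mp hcard)
          rw [hU0]
          simpa [chiS_empty] using hpos
        | succ n ih =>
          intro U hU hcard
          rcases Set.eq_empty_or_nonempty U with rfl | ⟨w0, hw0⟩
          · simpa [chiS_empty] using hpos
          · set X := (A \ insert a1 (G.neighborSet a1)) ∩ G.neighborSet w0 with hXdef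
            have hw0B : w0 ∈ B := (hU hw0).1
            have hXA : X ⊆ A := fun x hx => hx.1.1
            have hXchi : ε * (chiS G A : ℝ) ≤ (chiS G X : ℝ) := by
              have h1 := hsplit (A \ insert a1 (G.neighborSet a1)) (G.neighborSet w0)
              have h2 : (chiS G ((A \ insert a1 (G.neighborSet a1)) \ G.neighborSet w0) : ℝ)
                  ≤ (chiS G (A \ G.neighborSet w0) : ℝ) :=
                hcast (chiS_mono G (fun x hx => ⟨hx.1.1, hx.2⟩))
              have h3 := hdense w0 hw0B
              linarith
            set Y := {w ∈ U | ∀ x ∈ X, G.Adj x w} with hYdef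
            have hYU : Y ⊆ U := fun w hw => hw.1
            have hYB : Y ⊆ B := fun w hw => (hU hw.1).1
            have hw0Y : w0 ∈ Y := by
              refine ⟨hw0, fun x hx => ?_⟩
              exact ((G.mem_neighborSet w0 x).mp hx.2).symm
            have hYsmall := hno1 X hXA Y hYB hXchi (fun x hx z hz => hz.2 x hx)
            have hclosure : ∀ w1 ∈ Y, ∀ w2 ∈ U, G.Adj w1 w2 → w2 ∈ Y := by
              intro w1 hw1 w2 hw2 hadj
              refine ⟨hw2, fun x hx => ?_⟩
              by_contra hna
              obtain ⟨hxA, hxN⟩ := hx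
              have hxA' : x ∈ A := hxA.1
              refine no_induced_P5 G hP5 a1 v x w1 w2
                ?_ ?_ ?_ ?_ ?_ ?_ ?_ ?_ ?_ ?_ ?_ ?_ ?_ ?_ ?_ ?_
              · exact (hAv a1 ha1).symm
              · exact hAv x hxA'
              · exact hw1.2 x ⟨hxA, hxN⟩
              · exact hadj
              · exact fun h => hxA.2 (Set.mem_insert_iff.mpr
                  (Or.inr ((G.mem_neighborSet a1 x).mpr h)))
              · exact fun h => (hU hw1.1).2 ((G.mem_neighborSet a1 w1).mpr h)
              · exact fun h => (hU hw2).2 ((G.mem_neighborSet a1 w2).mpr h)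
              · exact (hBv w1 (hYB hw1)).1
              · exact (hBv w2 (hU hw2).1).1
              · exact hna
              · exact fun h => hxA.2 (Set.mem_insert_iff.mpr (Or.inl h.symm))
              · exact hAB a1 ha1 w1 (hYB hw1)
              · exact hAB a1 ha1 w2 (hU hw2).1
              · exact fun h => (hBv w1 (hYB hw1)).2 h.symm
              · exact fun h => (hBv w2 (hU hw2).1).2 h.symm
              · exact hAB x hxA' w2 (hU hw2).1
            have hanti : ∀ y ∈ Y, ∀ u ∈ U \ Y, ¬ G.Adj y u :=
              fun y hy u hu hadj => hu.2 (hclosure y hy u hu.1 hadj)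
            have hmax : chiS G U ≤ max (chiS G Y) (chiS G (U \ Y)) := by
              calc chiS G U = chiS G (Y ∪ (U \ Y)) := by rw [Set.union_diff_cancel hYU]
                _ ≤ _ := chiS_max G hanti
            have hcard2 : (U \ Y).ncard ≤ n := by
              have hss : U \ Y ⊂ U := by
                refine Set.ssubset_iff_subset_ne.mpr ⟨Set.diff_subset, fun h => ?_⟩
                rw [Set.ext_iff] at h
                exact ((h w0).mpr hw0).2 hw0Y
              have := Set.ncard_lt_ncard hss (Set.toFinite U)
              omega
            have hIH := ih (U \ Y) (fun x hx => hU hx.1) hcard2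
            have hmaxR : (chiS G U : ℝ) ≤ max (chiS G Y : ℝ) (chiS G (U \ Y) : ℝ) := by
              have := hcast hmax
              simpa [Nat.cast_max] using this
            have := max_lt hYsmall hIH
            linarith
      exact main (B \ G.neighborSet a1).ncard (B \ G.neighborSet a1) subset_rfl le_rfl
    -- Step 2 : the set of "dominant" vertices of A
    set Ad := {a ∈ A | (chiS G (A \ insert a (G.neighborSet a)) : ℝ) < 2*ε*(chiS G A : ℝ)}
      with hAdDef
    have hAdA : Ad ⊆ A := fun a ha => ha.1
    by_cases hAdbig : (chiS G A : ℝ)/2 ≤ (chiS G Ad : ℝ)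
    · obtain ⟨u, huAd, hbig⟩ := hno2 Ad hAdA hAdbig
      have hmono : (chiS G (Ad \ insert u (G.neighborSet u)) : ℝ)
          ≤ (chiS G (A \ insert u (G.neighborSet u)) : ℝ) :=
        hcast (chiS_mono G (fun x hx => ⟨hAdA hx.1, hx.2⟩))
      have hq : 2*ε*(chiS G A : ℝ) ≤ 4*ε*(chiS G Ad : ℝ) := by nlinarith
      have := huAd.2
      linarith
    · have hAs1 : (chiS G A : ℝ) ≤ (chiS G Ad : ℝ) + (chiS G (A \ Ad) : ℝ) := by
        have := hsplit A Ad
        rwa [Set.inter_eq_self_of_subset_right hAdA] at this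
      have hAschi : (chiS G A : ℝ)/2 < (chiS G (A \ Ad) : ℝ) := by
        push_neg at hAdbig
        linarith
      have hAs : ∀ a ∈ A \ Ad,
          2*ε*(chiS G A : ℝ) ≤ (chiS G (A \ insert a (G.neighborSet a)) : ℝ) := by
        intro a ha
        have h1 : ¬ ((chiS G (A \ insert a (G.neighborSet a)) : ℝ) < 2*ε*(chiS G A : ℝ)) :=
          fun h => ha.2 ⟨ha.1, h⟩
        linarith [not_lt.mp h1]
      -- Step 3 : the set of "dominant" vertices of B
      set Bd := {b ∈ B | (chiS G (B \ insert b (G.neighborSet b)) : ℝ) < 2*ε*(chiS G B : ℝ)}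
        with hBdDef
      have hBdB : Bd ⊆ B := fun b hb => hb.1
      by_cases hBdbig : (chiS G B : ℝ)/2 ≤ (chiS G Bd : ℝ)
      · obtain ⟨u, huBd, hbig⟩ := hno3 Bd hBdB hBdbig
        have hmono : (chiS G (Bd \ insert u (G.neighborSet u)) : ℝ)
            ≤ (chiS G (B \ insert u (G.neighborSet u)) : ℝ) :=
          hcast (chiS_mono G (fun x hx => ⟨hBdB hx.1, hx.2⟩))
        have hq : 2*ε*(chiS G B : ℝ) ≤ 4*ε*(chiS G Bd : ℝ) := by nlinarith
        have := huBd.2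
        linarith
      · have hBs1 : (chiS G B : ℝ) ≤ (chiS G Bd : ℝ) + (chiS G (B \ Bd) : ℝ) := by
          have := hsplit B Bd
          rwa [Set.inter_eq_self_of_subset_right hBdB] at this
        have hBschi : (chiS G B : ℝ)/2 < (chiS G (B \ Bd) : ℝ) := by
          push_neg at hBdbig
          linarith
        have hBs : ∀ b ∈ B \ Bd,
            2*ε*(chiS G B : ℝ) ≤ (chiS G (B \ insert b (G.neighborSet b)) : ℝ) := by
          intro b hb
          have h1 : ¬ ((chiS G (B \ insert b (G.neighborSet b)) : ℝ) < 2*ε*(chiS G B : ℝ)) :=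
            fun h => hb.2 ⟨hb.1, h⟩
          linarith [not_lt.mp h1]
        -- Step 4 : find a non-adjacent pair (a, b) with a ∈ A \ Ad, b ∈ B \ Bd
        have hnc : ¬ (∀ x ∈ A \ Ad, ∀ z ∈ B \ Bd, G.Adj x z) := by
          intro hcomp
          have hAsge : ε * (chiS G A : ℝ) ≤ (chiS G (A \ Ad) : ℝ) := by nlinarith
          have h1 := hno1 (A \ Ad) Set.diff_subset (B \ Bd) Set.diff_subset hAsge hcomp
          nlinarith
        push_neg at hnc
        obtain ⟨a, haAs, b, hbBs, hab⟩ := hnc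
        have haA : a ∈ A := haAs.1
        have hbB : b ∈ B := hbBs.1
        -- Step 5 : the pure pair
        set X := (A \ insert a (G.neighborSet a)) ∩ G.neighborSet b with hXdef
        set Y := (B \ insert b (G.neighborSet b)) ∩ G.neighborSet a with hYdef
        have hXA : X ⊆ A := fun x hx => hx.1.1
        have hYB : Y ⊆ B := fun z hz => hz.1.1
        have hXchi : ε * (chiS G A : ℝ) ≤ (chiS G X : ℝ) := by
          have h1 := hsplit (A \ insert a (G.neighborSet a)) (G.neighborSet b)
          have h2 : (chiS G ((A \ insert a (G.neighborSet a)) \ G.neighborSet b) : ℝ)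
              ≤ (chiS G (A \ G.neighborSet b) : ℝ) :=
            hcast (chiS_mono G (fun x hx => ⟨hx.1.1, hx.2⟩))
          have h3 := hdense b hbB
          have h4 := hAs a haAs
          linarith
        have hstep1b := step1 a haA (hAs a haAs)
        have hYchi : ε * (chiS G B : ℝ) ≤ (chiS G Y : ℝ) := by
          have h1 := hsplit (B \ insert b (G.neighborSet b)) (G.neighborSet a)
          have h2 : (chiS G ((B \ insert b (G.neighborSet b)) \ G.neighborSet a) : ℝ)
              ≤ (chiS G (B \ G.neighborSet a) : ℝ) :=
            hcast (chiS_mono G (fun x hx => ⟨hx.1.1, hx.2⟩))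
          have h4 := hBs b hbBs
          linarith
        have hcomp : ∀ x ∈ X, ∀ z ∈ Y, G.Adj x z := by
          intro x hx z hz
          by_contra hna
          refine no_induced_P5 G hP5 z a v x b
            ?_ ?_ ?_ ?_ ?_ ?_ ?_ ?_ ?_ ?_ ?_ ?_ ?_ ?_ ?_ ?_
          · exact ((G.mem_neighborSet a z).mp hz.2).symm
          · exact (hAv a haA).symm
          · exact hAv x (hXA hx)
          · exact ((G.mem_neighborSet b x).mp hx.2).symm
          · exact fun h => (hBv z (hYB hz)).1 h.symm
          · exact fun h => hna h.symm
          · exact fun h => hz.1.2 (Set.mem_insert_iff.mpr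
              (Or.inr ((G.mem_neighborSet b z).mpr h.symm)))
          · exact fun h => hx.1.2 (Set.mem_insert_iff.mpr
              (Or.inr ((G.mem_neighborSet a x).mpr h)))
          · exact hab
          · exact (hBv b hbB).1
          · exact (hBv z (hYB hz)).2
          · exact fun h => hAB x (hXA hx) z (hYB hz) h.symm
          · exact fun h => hz.1.2 (Set.mem_insert_iff.mpr (Or.inl h))
          · exact fun h => hx.1.2 (Set.mem_insert_iff.mpr (Or.inl h.symm))
          · exact hAB a haA b hbB
          · exact fun h => (hBv b hbB).2 h.symm
        have := hno1 X hXA Y hYB hXchi hcomp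
        linarith
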